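/- arXiv:2512.08660 — 3 statements merged into one kernel-verified Lean document; each statement's English description precedes it below -/
import Mathlib

section
/- Let q > 0, and let Z : ℝ × ℝ → ℝ be differentiable satisfying ∂Z/∂t + v(t)·∂Z/∂x = r(x,t)·q with Z(x,0) = 0, where v is continuous and r is continuous. Let φ : ℝ → ℝ be differentiable with 0 < φ(y) < q for all y, and set V(t) = ∫₀ᵗ v. Then u(x,t) = q·φ(x−V(t)) / (φ(x−V(t)) + (q − φ(x−V(t)))·exp(−Z(x,t))) satisfies the PDE ∂u/∂t + v(t)·∂u/∂x = r(x,t)·(q − u)·u, and u(x,0) = φ(x). -/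
theorem stmt1 (q : ℝ) (hq : 0 < q) (v : ℝ → ℝ) (r : ℝ → ℝ → ℝ)
    (hv : Continuous v) (hr : Continuous fun p : ℝ × ℝ => r p.1 p.2)
    (Z : ℝ → ℝ → ℝ) (hZdiff : Differentiable ℝ fun p : ℝ × ℝ => Z p.1 p.2)
    (hZpde : ∀ x t, deriv (fun s => Z x s) t + v t * deriv (fun y => Z y t) x = r x t * q)
    (hZ0 : ∀ x, Z x 0 = 0)
    (φ : ℝ → ℝ) (hφ : Differentiable ℝ φ) (hφq : ∀ y, 0 < φ y ∧ φ y < q)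
    (V : ℝ → ℝ) (hV : ∀ t, V t = ∫ τ in (0:ℝ)..t, v τ)
    (u : ℝ → ℝ → ℝ)
    (hu : ∀ x t, u x t =
      q * φ (x - V t) / (φ (x - V t) + (q - φ (x - V t)) * Real.exp (-(Z x t)))) :
    (∀ x t, deriv (fun s => u x s) t + v t * deriv (fun y => u y t) x
        = r x t * (q - u x t) * u x t) ∧ (∀ x, u x 0 = φ x) := by
  have hufun : ∀ x, (fun s => u x s) = fun s =>
      q * φ (x - V s) / (φ (x - V s) + (q - φ (x - V s)) * Real.exp (-(Z x s))) :=
    fun x => funext fun s => hu x s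
  have hufun' : ∀ t, (fun y => u y t) = fun y =>
      q * φ (y - V t) / (φ (y - V t) + (q - φ (y - V t)) * Real.exp (-(Z y t))) :=
    fun t => funext fun y => hu y t
  have hDpos : ∀ x t, 0 < φ (x - V t) + (q - φ (x - V t)) * Real.exp (-(Z x t)) := by
    intro x t
    have h1 := (hφq (x - V t)).1
    have h2 := (hφq (x - V t)).2
    have h3 := Real.exp_pos (-(Z x t))
    nlinarith
  constructor
  · intro x t
    -- abbreviations
    set w := x - V t with hw
    set a := φ w with ha
    set p := deriv φ w with hp
    set E := Real.exp (-(Z x t)) with hE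
    set Zt := deriv (fun s => Z x s) t with hZtdef
    set Zx := deriv (fun y => Z y t) x with hZxdef
    have hDne : a + (q - a) * E ≠ 0 := ne_of_gt (hDpos x t)
    -- derivative of V
    have hVd : HasDerivAt V (v t) t := by
      have : HasDerivAt (fun s => ∫ τ in (0:ℝ)..s, v τ) (v t) t :=
        intervalIntegral.integral_hasDerivAt_right (hv.intervalIntegrable 0 t)
          (hv.stronglyMeasurableAtFilter _ _) hv.continuousAt
      exact (funext hV : V = _) ▸ this
    -- derivatives of slices of Z
    have hZts : HasDerivAt (fun s => Z x s) Zt t := by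
      have : DifferentiableAt ℝ (fun s => Z x s) t := by
        have h := (hZdiff (x, t)).comp t
          ((differentiableAt_const x).prodMk differentiableAt_id)
        exact h
      exact this.hasDerivAt
    have hZxs : HasDerivAt (fun y => Z y t) Zx x := by
      have : DifferentiableAt ℝ (fun y => Z y t) x := by
        have h := (hZdiff (x, t)).comp x
          ((differentiableAt_id : DifferentiableAt ℝ (id : ℝ → ℝ) x).prodMk (differentiableAt_const t))
        exact h
      exact this.hasDerivAt
    -- t-derivative of u x ·
    have hwt : HasDerivAt (fun s => x - V s) (0 - v t) t :=
      (hasDerivAt_const t x).sub hVd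
    have hAt : HasDerivAt (fun s => φ (x - V s)) (p * (0 - v t)) t :=
      (hφ.differentiableAt.hasDerivAt).comp t hwt
    have hEt : HasDerivAt (fun s => Real.exp (-(Z x s))) (E * (-Zt)) t := by
      have := (hZts.neg).exp
      simpa using this
    have hBt : HasDerivAt (fun s => (q - φ (x - V s)) * Real.exp (-(Z x s)))
        ((0 - p * (0 - v t)) * E + (q - a) * (E * (-Zt))) t :=
      (((hasDerivAt_const t q).sub hAt)).mul hEt
    have hut : HasDerivAt (fun s => u x s)
        ((q * (p * (0 - v t)) * (a + (q - a) * E)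
          - q * a * (p * (0 - v t) + ((0 - p * (0 - v t)) * E + (q - a) * (E * (-Zt)))))
          / (a + (q - a) * E) ^ 2) t := by
      rw [hufun x]
      exact (hAt.const_mul q).div (hAt.add hBt) hDne
    -- x-derivative of u · t
    have hwx : HasDerivAt (fun y => y - V t) (1 - 0) x :=
      (hasDerivAt_id x).sub (hasDerivAt_const x (V t))
    have hAx : HasDerivAt (fun y => φ (y - V t)) (p * (1 - 0)) x := by
      have := (hφ.differentiableAt.hasDerivAt).comp x hwx
      exact this
    have hEx : HasDerivAt (fun y => Real.exp (-(Z y t))) (E * (-Zx)) x := by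
      have := (hZxs.neg).exp
      simpa using this
    have hBx : HasDerivAt (fun y => (q - φ (y - V t)) * Real.exp (-(Z y t)))
        ((0 - p * (1 - 0)) * E + (q - a) * (E * (-Zx))) x :=
      (((hasDerivAt_const x q).sub hAx)).mul hEx
    have hux : HasDerivAt (fun y => u y t)
        ((q * (p * (1 - 0)) * (a + (q - a) * E)
          - q * a * (p * (1 - 0) + ((0 - p * (1 - 0)) * E + (q - a) * (E * (-Zx)))))
          / (a + (q - a) * E) ^ 2) x := by
      rw [hufun' t]
      exact (hAx.const_mul q).div (hAx.add hBx) hDne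
    rw [hut.deriv, hux.deriv, hu x t, ← hw, ← ha, ← hE]
    have hkey : Zt = r x t * q - v t * Zx := by
      have := hZpde x t
      linarith
    have hEpos : 0 < E := Real.exp_pos _
    rw [hkey]
    field_simp
    ring
  · intro x
    rw [hu x 0, hZ0 x]
    have h0 : V 0 = 0 := by rw [hV 0]; simp
    simp only [h0, sub_zero, neg_zero, Real.exp_zero, mul_one]
    have h1 := (hφq x).1
    field_simp
    have hq' : φ x + (q - φ x) = q := by ring
    rw [hq', div_self hq.ne']
end

section
/- Let q > 0, let v be continuous and positive with V(t) = ∫₀ᵗ v a strictly increasing bijection of [0,∞), let g : [0,∞) → ℝ be differentiable with 0 < g(s) < q for all s, and let μ be differentiable with ∂μ/∂t + v(t)·∂μ/∂x = r(x,t)·q and μ(0,t) = 0. Then u₂(x,t) = q·g(y₂)/(g(y₂) + (q − g(y₂))·e^{−μ(x,t)}), with y₂ = V⁻¹(V(t) − x), satisfies ∂u₂/∂t + v(t)·∂u₂/∂x = r(x,t)·(q − u₂)·u₂ on {0 < x < V(t)}, and u₂(0,t) = g(t). -/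
theorem stmt9 (q : ℝ) (hq : 0 < q) (v : ℝ → ℝ) (r : ℝ → ℝ → ℝ)
    (hv : Continuous v) (hvpos : ∀ t, 0 < v t)
    (V : ℝ → ℝ) (hV : ∀ t, V t = ∫ τ in (0:ℝ)..t, v τ)
    (Vinv : ℝ → ℝ) (hinv₁ : ∀ t, 0 ≤ t → Vinv (V t) = t)
    (hinv₂ : ∀ s, 0 ≤ s → V (Vinv s) = s)
    (g : ℝ → ℝ) (hg : Differentiable ℝ g) (hgq : ∀ s, 0 ≤ s → 0 < g s ∧ g s < q)
    (μ : ℝ → ℝ → ℝ) (hμdiff : Differentiable ℝ fun p : ℝ × ℝ => μ p.1 p.2)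
    (hμpde : ∀ x t, deriv (fun s => μ x s) t + v t * deriv (fun y => μ y t) x = r x t * q)
    (hμ0 : ∀ t, μ 0 t = 0)
    (u₂ : ℝ → ℝ → ℝ)
    (hu₂ : ∀ x t, u₂ x t =
      q * g (Vinv (V t - x)) /
        (g (Vinv (V t - x)) + (q - g (Vinv (V t - x))) * Real.exp (-(μ x t)))) :
    (∀ x t, 0 < x → x < V t →
      deriv (fun s => u₂ x s) t + v t * deriv (fun y => u₂ y t) x
        = r x t * (q - u₂ x t) * u₂ x t) ∧
    (∀ t, 0 ≤ t → u₂ 0 t = g t) := by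
  have hVfun : V = fun t => ∫ τ in (0:ℝ)..t, v τ := funext hV
  have hVd : ∀ u, HasStrictDerivAt V (v u) u := fun u => by
    rw [hVfun]; exact hv.integral_hasStrictDerivAt 0 u
  have hV0 : V 0 = 0 := by rw [hV]; simp
  have hVmono : StrictMono V :=
    strictMono_of_deriv_pos fun u => by
      rw [(hVd u).hasDerivAt.deriv]; exact hvpos u
  constructor
  · intro x t hx hxV
    set s := V t - x with hs_def
    have hs : 0 < s := by simp [hs_def]; linarith
    set t0 := Vinv s with ht0_def
    have hVt0 : V t0 = s := hinv₂ s hs.le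
    have ht0pos : 0 < t0 := by
      have : V 0 < V t0 := by rw [hV0, hVt0]; exact hs
      exact hVmono.lt_iff_lt.mp this
    -- derivative of Vinv at s
    have hleft : ∀ᶠ y in nhds t0, Vinv (V y) = y :=
      (eventually_gt_nhds ht0pos).mono fun y hy => hinv₁ y hy.le
    have hVinv : HasDerivAt Vinv (v t0)⁻¹ s := by
      have := ((hVd t0).to_local_left_inverse (ne_of_gt (hvpos t0)) hleft).hasDerivAt
      rwa [hVt0] at this
    set p := (v t0)⁻¹ with hp_def
    set c := v t with hc_def
    set a := g t0 with ha_def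
    set a' := deriv g t0 with ha'_def
    set m := μ x t with hm_def
    set mt := deriv (fun s => μ x s) t with hmt_def
    set mx := deriv (fun y => μ y t) x with hmx_def
    have ha_pos : 0 < a := (hgq t0 ht0pos.le).1
    have ha_lt : a < q := (hgq t0 ht0pos.le).2
    set e := Real.exp (-m) with he_def
    have he_pos : 0 < e := Real.exp_pos _
    have hDpos : 0 < a + (q - a) * e := by nlinarith
    have hD : a + (q - a) * e ≠ 0 := ne_of_gt hDpos
    -- partial derivatives of μ
    have hμt : HasDerivAt (fun s => μ x s) mt t := by
      refine DifferentiableAt.hasDerivAt ?_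
      exact ((hμdiff (x, t)).comp t
        ((differentiableAt_const x).prodMk differentiableAt_fun_id))
    have hμx : HasDerivAt (fun y => μ y t) mx x := by
      refine DifferentiableAt.hasDerivAt ?_
      exact (DifferentiableAt.comp (f := fun y : ℝ => (y, t)) x (hμdiff (x, t))
        ((differentiableAt_fun_id (x := x)).prodMk (differentiableAt_const t)))
    -- derivative of s ↦ g (Vinv (V s - x)) at t
    have h1 : HasDerivAt (fun u => V u - x) c t := ((hVd t).hasDerivAt).sub_const x
    have h3 : HasDerivAt (fun u => Vinv (V u - x)) (p * c) t := hVinv.comp t h1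
    have h4 : HasDerivAt (fun u => g (Vinv (V u - x))) (a' * (p * c)) t :=
      ((hg t0).hasDerivAt).comp t h3
    -- derivative of y ↦ g (Vinv (V t - y)) at x
    have k1 : HasDerivAt (fun y => V t - y) (-1) x := by
      simpa using (hasDerivAt_id x).const_sub (V t)
    have k3 : HasDerivAt (fun y => Vinv (V t - y)) (p * -1) x := hVinv.comp x k1
    have k4 : HasDerivAt (fun y => g (Vinv (V t - y))) (a' * (p * -1)) x :=
      ((hg t0).hasDerivAt).comp x k3
    -- exp parts
    have hEt : HasDerivAt (fun u => Real.exp (-(μ x u))) (e * -mt) t := hμt.neg.exp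
    have hEx : HasDerivAt (fun y => Real.exp (-(μ y t))) (e * -mx) x := hμx.neg.exp
    -- full derivative in t
    have hDt : HasDerivAt (fun u => g (Vinv (V u - x)) +
        (q - g (Vinv (V u - x))) * Real.exp (-(μ x u)))
        (a' * (p * c) + (-(a' * (p * c)) * e + (q - a) * (e * -mt))) t :=
      h4.add ((h4.const_sub q).mul hEt)
    have hNt : HasDerivAt (fun u => q * g (Vinv (V u - x))) (q * (a' * (p * c))) t :=
      h4.const_mul q
    have hut : HasDerivAt (fun u => u₂ x u)
        ((q * (a' * (p * c)) * (a + (q - a) * e) -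
          q * a * (a' * (p * c) + (-(a' * (p * c)) * e + (q - a) * (e * -mt)))) /
          (a + (q - a) * e) ^ 2) t := by
      have := hNt.div hDt hD
      have hfeq : (fun u => u₂ x u) = fun u => q * g (Vinv (V u - x)) /
          (g (Vinv (V u - x)) + (q - g (Vinv (V u - x))) * Real.exp (-(μ x u))) :=
        funext fun u => hu₂ x u
      rw [hfeq]
      exact this
    -- full derivative in x
    have hDx : HasDerivAt (fun y => g (Vinv (V t - y)) +
        (q - g (Vinv (V t - y))) * Real.exp (-(μ y t)))
        (a' * (p * -1) + (-(a' * (p * -1)) * e + (q - a) * (e * -mx))) x :=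
      k4.add ((k4.const_sub q).mul hEx)
    have hNx : HasDerivAt (fun y => q * g (Vinv (V t - y))) (q * (a' * (p * -1))) x :=
      k4.const_mul q
    have hux : HasDerivAt (fun y => u₂ y t)
        ((q * (a' * (p * -1)) * (a + (q - a) * e) -
          q * a * (a' * (p * -1) + (-(a' * (p * -1)) * e + (q - a) * (e * -mx)))) /
          (a + (q - a) * e) ^ 2) x := by
      have := hNx.div hDx hD
      have hfeq : (fun y => u₂ y t) = fun y => q * g (Vinv (V t - y)) /
          (g (Vinv (V t - y)) + (q - g (Vinv (V t - y))) * Real.exp (-(μ y t))) :=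
        funext fun y => hu₂ y t
      rw [hfeq]
      exact this
    rw [hut.deriv, hux.deriv, hu₂ x t, ← hs_def, ← ht0_def, ← ha_def, ← hm_def, ← he_def]
    have hpde : mt + c * mx = r x t * q := hμpde x t
    have hr : r x t = (mt + c * mx) / q := by field_simp; linarith
    rw [hr]
    field_simp
    ring
  · intro t ht
    rw [hu₂ 0 t]
    rw [sub_zero, hinv₁ t ht, hμ0 t]
    simp only [neg_zero, Real.exp_zero, mul_one]
    have : g t + (q - g t) = q := by ring
    rw [this, mul_comm, mul_div_assoc, div_self hq.ne', mul_one]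
end

section
/- Let q : ℝ → ℝ be differentiable with q > 0, and let φ, Z₁, v, r be as in Theorem 2(i): φ differentiable with 0 < φ(y) < q(y), V(t) = ∫₀ᵗ v, and Z₁ differentiable satisfying ∂Z₁/∂t + v(t)∂Z₁/∂x = q(x)r(x,t) + r(x,t)·φ(y₁)·(q(x) − q(y₁))/(q(y₁) − φ(y₁))·e^{Z₁(x,t)} with Z₁(x,0) = 0, where y₁ = x − V(t). Then u₁(x,t) = q(y₁)φ(y₁)/(φ(y₁) + (q(y₁) − φ(y₁))e^{−Z₁(x,t)}) satisfies ∂u₁/∂t + v(t)∂u₁/∂x = r(x,t)(q(x) − u₁)u₁ and u₁(x,0) = φ(x). -/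
theorem stmt13 (q : ℝ → ℝ) (hqdiff : Differentiable ℝ q) (hqpos : ∀ x, 0 < q x)
    (v : ℝ → ℝ) (r : ℝ → ℝ → ℝ) (hv : Continuous v)
    (hr : Continuous fun p : ℝ × ℝ => r p.1 p.2)
    (φ : ℝ → ℝ) (hφ : Differentiable ℝ φ) (hφq : ∀ y, 0 < φ y ∧ φ y < q y)
    (V : ℝ → ℝ) (hV : ∀ t, V t = ∫ τ in (0:ℝ)..t, v τ)
    (Z₁ : ℝ → ℝ → ℝ) (hZdiff : Differentiable ℝ fun p : ℝ × ℝ => Z₁ p.1 p.2)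
    (hZpde : ∀ x t, deriv (fun s => Z₁ x s) t + v t * deriv (fun y => Z₁ y t) x
      = q x * r x t + r x t * φ (x - V t) * (q x - q (x - V t)) /
          (q (x - V t) - φ (x - V t)) * Real.exp (Z₁ x t))
    (hZ0 : ∀ x, Z₁ x 0 = 0)
    (u₁ : ℝ → ℝ → ℝ)
    (hu₁ : ∀ x t, u₁ x t = q (x - V t) * φ (x - V t) /
      (φ (x - V t) + (q (x - V t) - φ (x - V t)) * Real.exp (-(Z₁ x t)))) :
    (∀ x t, deriv (fun s => u₁ x s) t + v t * deriv (fun y => u₁ y t) x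
        = r x t * (q x - u₁ x t) * u₁ x t) ∧
    (∀ x, u₁ x 0 = φ x) := by
  have hVfun : V = fun t => ∫ τ in (0:ℝ)..t, v τ := funext hV
  constructor
  · intro x t
    have hVd : HasDerivAt V (v t) t := by
      rw [hVfun]
      exact intervalIntegral.integral_hasDerivAt_right (hv.intervalIntegrable _ _)
        (hv.stronglyMeasurableAtFilter _ _) hv.continuousAt
    set y := x - V t with hy
    set Zt := deriv (fun s => Z₁ x s) t with hZt
    set Zx := deriv (fun w => Z₁ w t) x with hZx
    have hZtd : HasDerivAt (fun s => Z₁ x s) Zt t := by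
      have : DifferentiableAt ℝ (fun s => Z₁ x s) t :=
        (hZdiff (x, t)).comp t ((differentiableAt_const x).prodMk differentiableAt_id)
      exact this.hasDerivAt
    have hZxd : HasDerivAt (fun w => Z₁ w t) Zx x := by
      have : DifferentiableAt ℝ (fun w => Z₁ w t) x :=
        by have h := (hZdiff (x, t)).comp x ((differentiableAt_id (𝕜 := ℝ) (x := x)).prodMk (differentiableAt_const t)); exact h
      exact this.hasDerivAt
    -- positivity facts
    have hb : 0 < φ y := (hφq y).1
    have hab : 0 < q y - φ y := sub_pos.mpr (hφq y).2
    have hEpos : 0 < Real.exp (-(Z₁ x t)) := Real.exp_pos _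
    have hD : 0 < φ y + (q y - φ y) * Real.exp (-(Z₁ x t)) := by positivity
    have hDne : φ y + (q y - φ y) * Real.exp (-(Z₁ x t)) ≠ 0 := ne_of_gt hD
    -- t-direction
    have hyt : HasDerivAt (fun s => x - V s) (0 - v t) t :=
      (hasDerivAt_const t x).sub hVd
    have hqt : HasDerivAt (fun s => q (x - V s)) (deriv q y * (0 - v t)) t :=
      (hqdiff y).hasDerivAt.comp t hyt
    have hφt : HasDerivAt (fun s => φ (x - V s)) (deriv φ y * (0 - v t)) t :=
      (hφ y).hasDerivAt.comp t hyt
    have hexpt : HasDerivAt (fun s => Real.exp (-(Z₁ x s)))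
        (Real.exp (-(Z₁ x t)) * -Zt) t := hZtd.neg.exp
    have hNt : HasDerivAt (fun s => q (x - V s) * φ (x - V s))
        (deriv q y * (0 - v t) * φ y + q y * (deriv φ y * (0 - v t))) t :=
      hqt.mul hφt
    have hDt : HasDerivAt
        (fun s => φ (x - V s) + (q (x - V s) - φ (x - V s)) * Real.exp (-(Z₁ x s)))
        (deriv φ y * (0 - v t) +
          ((deriv q y * (0 - v t) - deriv φ y * (0 - v t)) * Real.exp (-(Z₁ x t)) +
            (q y - φ y) * (Real.exp (-(Z₁ x t)) * -Zt))) t :=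
      hφt.add ((hqt.sub hφt).mul hexpt)
    have hut : HasDerivAt (fun s => u₁ x s)
        (((deriv q y * (0 - v t) * φ y + q y * (deriv φ y * (0 - v t))) *
            (φ y + (q y - φ y) * Real.exp (-(Z₁ x t))) -
          q y * φ y *
            (deriv φ y * (0 - v t) +
              ((deriv q y * (0 - v t) - deriv φ y * (0 - v t)) * Real.exp (-(Z₁ x t)) +
                (q y - φ y) * (Real.exp (-(Z₁ x t)) * -Zt)))) /
          (φ y + (q y - φ y) * Real.exp (-(Z₁ x t))) ^ 2) t := by
      have := hNt.div hDt hDne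
      refine HasDerivAt.congr_of_eventuallyEq this ?_
      filter_upwards with s
      rw [hu₁]; rfl
    -- x-direction
    have hyx : HasDerivAt (fun w => w - V t) (1 - 0) x :=
      (hasDerivAt_id x).sub (hasDerivAt_const x (V t))
    have hqx : HasDerivAt (fun w => q (w - V t)) (deriv q y * (1 - 0)) x :=
      (hqdiff y).hasDerivAt.comp x hyx
    have hφx : HasDerivAt (fun w => φ (w - V t)) (deriv φ y * (1 - 0)) x :=
      (hφ y).hasDerivAt.comp x hyx
    have hexpx : HasDerivAt (fun w => Real.exp (-(Z₁ w t)))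
        (Real.exp (-(Z₁ x t)) * -Zx) x := hZxd.neg.exp
    have hNx : HasDerivAt (fun w => q (w - V t) * φ (w - V t))
        (deriv q y * (1 - 0) * φ y + q y * (deriv φ y * (1 - 0))) x :=
      hqx.mul hφx
    have hDx : HasDerivAt
        (fun w => φ (w - V t) + (q (w - V t) - φ (w - V t)) * Real.exp (-(Z₁ w t)))
        (deriv φ y * (1 - 0) +
          ((deriv q y * (1 - 0) - deriv φ y * (1 - 0)) * Real.exp (-(Z₁ x t)) +
            (q y - φ y) * (Real.exp (-(Z₁ x t)) * -Zx))) x :=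
      hφx.add ((hqx.sub hφx).mul hexpx)
    have hux : HasDerivAt (fun w => u₁ w t)
        (((deriv q y * (1 - 0) * φ y + q y * (deriv φ y * (1 - 0))) *
            (φ y + (q y - φ y) * Real.exp (-(Z₁ x t))) -
          q y * φ y *
            (deriv φ y * (1 - 0) +
              ((deriv q y * (1 - 0) - deriv φ y * (1 - 0)) * Real.exp (-(Z₁ x t)) +
                (q y - φ y) * (Real.exp (-(Z₁ x t)) * -Zx)))) /
          (φ y + (q y - φ y) * Real.exp (-(Z₁ x t))) ^ 2) x := by
      have := hNx.div hDx hDne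
      refine HasDerivAt.congr_of_eventuallyEq this ?_
      filter_upwards with w
      rw [hu₁]; rfl
    rw [hut.deriv, hux.deriv, hu₁ x t]
    have hsum := hZpde x t
    rw [← hZt, ← hZx, ← hy] at hsum
    have habne : q y - φ y ≠ 0 := ne_of_gt hab
    have hZteq : Zt = q x * r x t + r x t * φ y * (q x - q y) / (q y - φ y) *
        Real.exp (Z₁ x t) - v t * Zx := by linarith
    rw [hZteq, Real.exp_neg]
    have hEne : Real.exp (Z₁ x t) ≠ 0 := Real.exp_ne_zero _
    have hDne' : φ y + (q y - φ y) * (Real.exp (Z₁ x t))⁻¹ ≠ 0 := by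
      rw [← Real.exp_neg]; exact hDne
    simp only [← hy]
    field_simp
    ring
  · intro x
    have hV0 : V 0 = 0 := by rw [hV]; simp
    have hq0 : q x ≠ 0 := ne_of_gt (hqpos x)
    rw [hu₁, hV0, sub_zero, hZ0, neg_zero, Real.exp_zero, mul_one,
      add_sub_cancel]
    field_simp
end
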